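/- For the game CSG({1,...,N}) with N ≥ 1 on a connected graph G: if |V(G)| ∈ {0,1} then the Grundy value equals |V(G)|; if 2 ≤ |V(G)| ≤ N then the Grundy value is at least 2; if |V(G)| = N+1 then the Grundy value is 0; and if |V(G)| = N+2 then the Grundy value is 1. -/

import Mathlib

open SimpleGraph

/-- The minimum excludant of a set of naturals. -/
noncomputable def mex (s : Set ℕ) : ℕ := sInf {n | n ∉ s}

/-- The graph induced on a set of vertices is connected. -/
def ConnOn {V : Type*} (G : SimpleGraph V) (s : Set V) : Prop := (G.induce s).Connected

/-- A legal move in the connected subtraction game CSG(L) on the graph `G`: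
from remaining vertex set `s`, remove the (nonempty) connected set `s \ t` whose
cardinality lies in `L`, leaving `t`, which must be empty or induce a connected graph. -/
def CsgMove {V : Type*} [DecidableEq V] (G : SimpleGraph V) (L : Set ℕ)
    (s t : Finset V) : Prop :=
  t ⊆ s ∧ (s \ t).Nonempty ∧ (s \ t).card ∈ L ∧
    ConnOn G (↑(s \ t) : Set V) ∧ (t = ∅ ∨ ConnOn G (↑t : Set V))

/-- The Grundy value of the position with remaining vertex set `s` in the game
CSG(L) played on `G`, defined by the mex recursion over all legal moves. -/
noncomputable def csgGrundy {V : Type*} [DecidableEq V] (G : SimpleGraph V) (L : Set ℕ)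
    (s : Finset V) : ℕ :=
  mex (Set.range fun t : {t : Finset V // CsgMove G L s t} =>
    have : t.1.card < s.card := by
      obtain ⟨x, hx⟩ := t.2.2.1
      rw [Finset.mem_sdiff] at hx
      exact Finset.card_lt_card ((Finset.ssubset_iff_of_subset t.2.1).2 ⟨x, hx.1, hx.2⟩)
    csgGrundy G L t.1)
termination_by s.card
decreasing_by exact this

/-- The subdivided star with `t` branches of lengths `l 0, …, l (t-1)` appended
to a central vertex `none`. -/
def subdividedStar {t : ℕ} (l : Fin t → ℕ) :
    SimpleGraph (Option (Σ i : Fin t, Fin (l i))) :=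
  SimpleGraph.fromRel fun a b =>
    match a, b with
    | none, some ⟨_, j⟩ => (j : ℕ) = 0
    | some ⟨i, j⟩, some ⟨i', j'⟩ => (i : ℕ) = (i' : ℕ) ∧ (j : ℕ) + 1 = (j' : ℕ)
    | _, _ => False

/-- The graph `G` with a path on `k` new vertices appended at the vertex `u`. -/
def appendPath {V : Type*} (G : SimpleGraph V) (u : V) (k : ℕ) :
    SimpleGraph (V ⊕ Fin k) :=
  SimpleGraph.fromRel fun a b =>
    match a, b with
    | Sum.inl x, Sum.inl y => G.Adj x y
    | Sum.inl x, Sum.inr j => x = u ∧ (j : ℕ) = 0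
    | Sum.inr j, Sum.inr j' => (j : ℕ) + 1 = (j' : ℕ)
    | _, _ => False

/-! ### Auxiliary lemmas -/

section Aux

lemma mex_le {S : Set ℕ} {n : ℕ} (h : n ∉ S) : mex S ≤ n := Nat.sInf_le h

lemma mex_eq_zero {S : Set ℕ} (h : 0 ∉ S) : mex S = 0 := Nat.le_zero.mp (mex_le h)

lemma mex_not_mem {S : Set ℕ} (h : ∃ n, n ∉ S) : mex S ∉ S := Nat.sInf_mem h

lemma two_le_mex {S : Set ℕ} (h0 : 0 ∈ S) (h1 : 1 ∈ S) (h : ∃ n, n ∉ S) : 2 ≤ mex S := by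
  have hm := mex_not_mem h
  have e0 : mex S ≠ 0 := fun e => hm (by rw [e]; exact h0)
  have e1 : mex S ≠ 1 := fun e => hm (by rw [e]; exact h1)
  omega

lemma mex_eq_one {S : Set ℕ} (h0 : 0 ∈ S) (h1 : 1 ∉ S) : mex S = 1 := by
  have hle := mex_le h1
  have hm := mex_not_mem ⟨1, h1⟩
  have e0 : mex S ≠ 0 := fun e => hm (by rw [e]; exact h0)
  omega

variable {V : Type*} [DecidableEq V]

lemma csgGrundy_eq (G : SimpleGraph V) (L : Set ℕ) (s : Finset V) :
    csgGrundy G L s = mex (Set.range fun t : {t : Finset V // CsgMove G L s t} =>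
      csgGrundy G L t.1) := by
  rw [csgGrundy]

lemma move_ssubset {G : SimpleGraph V} {L : Set ℕ} {s t : Finset V}
    (h : CsgMove G L s t) : t ⊂ s := by
  obtain ⟨x, hx⟩ := h.2.1
  rw [Finset.mem_sdiff] at hx
  exact (Finset.ssubset_iff_of_subset h.1).2 ⟨x, hx.1, hx.2⟩

lemma grundy_le_card (G : SimpleGraph V) (L : Set ℕ) (s : Finset V) :
    csgGrundy G L s ≤ s.card := by
  induction s using Finset.strongInduction with
  | _ s ih =>
    rw [csgGrundy_eq]
    apply mex_le
    rintro ⟨⟨t, ht⟩, hval⟩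
    have hss := move_ssubset ht
    have h1 := ih t hss
    have h2 := Finset.card_lt_card hss
    simp only at hval
    omega

lemma connOn_singleton (G : SimpleGraph V) (v : V) : ConnOn G ({v} : Set V) := by
  rw [ConnOn, induce_singleton_eq_top]
  haveI : Nonempty ({v} : Set V) := ⟨⟨v, rfl⟩⟩
  exact connected_top

lemma grundy_empty (G : SimpleGraph V) (L : Set ℕ) : csgGrundy G L (∅ : Finset V) = 0 := by
  rw [csgGrundy_eq]
  apply mex_eq_zero
  rintro ⟨⟨t, ht⟩, -⟩
  simpa using ht.2.1

lemma grundy_singleton (G : SimpleGraph V) {L : Set ℕ} (h1 : (1 : ℕ) ∈ L) (v : V) :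
    csgGrundy G L {v} = 1 := by
  rw [csgGrundy_eq]
  have hmove : CsgMove G L {v} ∅ := by
    refine ⟨Finset.empty_subset _, by simp, by simpa using h1, ?_, Or.inl rfl⟩
    simpa using connOn_singleton G v
  apply mex_eq_one
  · exact ⟨⟨∅, hmove⟩, grundy_empty G L⟩
  · rintro ⟨⟨t, ht⟩, hval⟩
    have ht0 : t = ∅ := by
      rcases Finset.subset_singleton_iff.mp ht.1 with rfl | rfl
      · rfl
      · have h := ht.2.1
        rw [Finset.sdiff_self] at h
        exact absurd h Finset.not_nonempty_empty
    subst ht0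
    simp only [grundy_empty G L] at hval
    omega

lemma exists_noncut {W : Type*} [Finite W] (H : SimpleGraph W) (hc : H.Connected)
    (h2 : 1 < Nat.card W) : ∃ v : W, (H.induce {x | x ≠ v}).Connected := by
  classical
  haveI hne : Nonempty W := hc.nonempty
  have u : W := Classical.arbitrary W
  obtain ⟨v, hv⟩ := Finite.exists_max (H.dist u)
  haveI : Nontrivial W := Finite.one_lt_card_iff_nontrivial.mp h2
  obtain ⟨w, hw⟩ := exists_ne u
  have hpos : 0 < H.dist u v :=
    lt_of_lt_of_le (hc.pos_dist_of_ne (Ne.symm hw)) (hv w)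
  have huv : u ≠ v := by
    rintro rfl; simp [SimpleGraph.dist_self] at hpos
  refine ⟨v, ?_⟩
  apply H.induce_connected_of_patches u huv
  intro x hx
  obtain ⟨p, hp⟩ := (hc u x).exists_walk_length_eq_dist
  have hvp : v ∉ p.support := by
    intro hmem
    have h1 : H.dist u v ≤ (p.takeUntil v hmem).length := H.dist_le _
    have h2' : H.dist v x ≤ (p.dropUntil v hmem).length := H.dist_le _
    have h3 : (p.takeUntil v hmem).length + (p.dropUntil v hmem).length = p.length := by
      rw [← Walk.length_append, p.take_spec hmem]
    have h4 : H.dist u x ≤ H.dist u v := hv x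
    have h5 : H.dist v x = 0 := by omega
    exact hx ((hc v x).dist_eq_zero_iff.mp h5).symm
  refine ⟨{y | y ∈ p.support}, ?_, p.start_mem_support, p.end_mem_support, ?_⟩
  · intro y hy
    exact fun h => hvp (h ▸ hy)
  · exact (p.connected_induce_support).preconnected _ _

/-- Iso between a doubly-induced graph and a singly-induced one. -/
def induceSdiffIso (G : SimpleGraph V) (s : Set V) (v : ↥s) :
    (G.induce s).induce {x | x ≠ v} ≃g G.induce (s \ {(v : V)}) where
  toFun x := ⟨x.1.1, x.1.2, fun h => x.2 (Subtype.ext h)⟩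
  invFun x := ⟨⟨x.1, x.2.1⟩, fun h => x.2.2 (congrArg Subtype.val h)⟩
  left_inv x := rfl
  right_inv x := rfl
  map_rel_iff' := Iff.rfl

lemma exists_noncut_finset (G : SimpleGraph V) {s : Finset V} (hconn : ConnOn G (↑s : Set V))
    (h2 : 2 ≤ s.card) : ∃ v ∈ s, ConnOn G (↑(s.erase v) : Set V) := by
  have hcard : 1 < Nat.card (↑(↑s : Set V)) := by
    rw [Nat.card_coe_set_eq, Set.ncard_coe_finset]; omega
  obtain ⟨v, hv⟩ := exists_noncut (G.induce (↑s : Set V)) hconn hcard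
  refine ⟨v.1, v.2, ?_⟩
  rw [ConnOn, Finset.coe_erase]
  exact ((induceSdiffIso G (↑s : Set V) v).connected_iff).mp hv

lemma csg_main {N : ℕ} (hN : 1 ≤ N) (G : SimpleGraph V) :
    ∀ n (s : Finset V), s.card ≤ n → ConnOn G (↑s : Set V) →
      (2 ≤ s.card → s.card ≤ N → 2 ≤ csgGrundy G (Set.Icc 1 N) s) ∧
      (s.card = N + 1 → csgGrundy G (Set.Icc 1 N) s = 0) ∧
      (s.card = N + 2 → csgGrundy G (Set.Icc 1 N) s = 1) := by
  intro n
  induction n with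
  | zero =>
    intro s hs _
    refine ⟨by omega, by omega, by omega⟩
  | succ n ih =>
    intro s hsn hconn
    have h1mem : (1 : ℕ) ∈ Set.Icc 1 N := Set.mem_Icc.mpr ⟨le_refl 1, hN⟩
    refine ⟨?_, ?_, ?_⟩
    · -- 2 ≤ s.card ≤ N : Grundy ≥ 2
      intro h2 hsN
      rw [csgGrundy_eq]
      obtain ⟨v, hv, hvc⟩ := exists_noncut_finset G hconn h2
      have m0 : CsgMove G (Set.Icc 1 N) s ∅ := by
        refine ⟨Finset.empty_subset _, ?_, ?_, ?_, Or.inl rfl⟩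
        · rw [Finset.sdiff_empty]; exact Finset.card_pos.mp (by omega)
        · rw [Finset.sdiff_empty]; exact Set.mem_Icc.mpr ⟨by omega, hsN⟩
        · rw [Finset.sdiff_empty]; exact hconn
      have m1 : CsgMove G (Set.Icc 1 N) s {v} := by
        refine ⟨Finset.singleton_subset_iff.mpr hv, ?_, ?_, ?_, Or.inr ?_⟩
        · rw [← Finset.erase_eq]
          exact Finset.card_pos.mp (by rw [Finset.card_erase_of_mem hv]; omega)
        · rw [← Finset.erase_eq, Finset.card_erase_of_mem hv]
          exact Set.mem_Icc.mpr ⟨by omega, by omega⟩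
        · rw [← Finset.erase_eq]; exact hvc
        · rw [Finset.coe_singleton]; exact connOn_singleton G v
      apply two_le_mex
      · exact ⟨⟨∅, m0⟩, grundy_empty G _⟩
      · exact ⟨⟨{v}, m1⟩, grundy_singleton G h1mem v⟩
      · refine ⟨s.card, ?_⟩
        rintro ⟨⟨t, ht⟩, hval⟩
        have h1 := grundy_le_card G (Set.Icc 1 N) t
        have h2' := Finset.card_lt_card (move_ssubset ht)
        simp only at hval
        omega
    · -- s.card = N + 1 : Grundy = 0
      intro hcard
      rw [csgGrundy_eq]
      apply mex_eq_zero
      rintro ⟨⟨t, ht⟩, hval⟩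
      simp only at hval
      obtain ⟨hsub, hne, hcardL, hrc, hor⟩ := ht
      have hc1 : (s \ t).card = s.card - t.card := Finset.card_sdiff_of_subset hsub
      have hts : t.card ≤ s.card := Finset.card_le_card hsub
      obtain ⟨hL1, hL2⟩ := Set.mem_Icc.mp hcardL
      have ht1 : 1 ≤ t.card := by omega
      have htN : t.card ≤ N := by omega
      have htconn : ConnOn G (↑t : Set V) := by
        rcases hor with rfl | h
        · simp at ht1
        · exact h
      rcases eq_or_lt_of_le ht1 with h1 | h2
      · obtain ⟨w, rfl⟩ := Finset.card_eq_one.mp h1.symm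
        rw [grundy_singleton G h1mem w] at hval
        exact one_ne_zero hval
      · have := (ih t (by omega) htconn).1 (by omega) htN
        omega
    · -- s.card = N + 2 : Grundy = 1
      intro hcard
      rw [csgGrundy_eq]
      obtain ⟨v, hv, hvc⟩ := exists_noncut_finset G hconn (by omega)
      have hsd : s \ s.erase v = {v} := by
        ext x
        simp only [Finset.mem_sdiff, Finset.mem_erase, Finset.mem_singleton, not_and]
        constructor
        · rintro ⟨hxs, hx⟩
          by_contra hne
          exact (hx hne) hxs
        · rintro rfl
          exact ⟨hv, fun h _ => absurd rfl h⟩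
      have hce : (s.erase v).card = N + 1 := by
        rw [Finset.card_erase_of_mem hv]; omega
      have m0 : CsgMove G (Set.Icc 1 N) s (s.erase v) := by
        refine ⟨Finset.erase_subset _ _, ?_, ?_, ?_, Or.inr hvc⟩
        · rw [hsd]; exact ⟨v, Finset.mem_singleton_self v⟩
        · rw [hsd, Finset.card_singleton]; exact h1mem
        · rw [hsd, Finset.coe_singleton]; exact connOn_singleton G v
      apply mex_eq_one
      · refine ⟨⟨s.erase v, m0⟩, ?_⟩
        exact (ih (s.erase v) (by omega) hvc).2.1 hce
      · rintro ⟨⟨t, ht⟩, hval⟩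
        simp only at hval
        obtain ⟨hsub, hne, hcardL, hrc, hor⟩ := ht
        have hc1 : (s \ t).card = s.card - t.card := Finset.card_sdiff_of_subset hsub
        have hts : t.card ≤ s.card := Finset.card_le_card hsub
        obtain ⟨hL1, hL2⟩ := Set.mem_Icc.mp hcardL
        have ht2 : 2 ≤ t.card := by omega
        have htN1 : t.card ≤ N + 1 := by omega
        have htconn : ConnOn G (↑t : Set V) := by
          rcases hor with rfl | h
          · simp at ht2
          · exact h
        rcases lt_or_ge t.card (N + 1) with hlt | hge
        · have := (ih t (by omega) htconn).1 ht2 (by omega)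
          omega
        · have := (ih t (by omega) htconn).2.1 (by omega)
          omega

end Aux

/-- Grundy values of CSG({1,…,N}) on a connected graph with few vertices. -/
theorem stmt5 (N : ℕ) (hN : 1 ≤ N) (V : Type) [Fintype V] [DecidableEq V]
    (G : SimpleGraph V) (hG : G.Preconnected) :
    (Fintype.card V ≤ 1 →
      csgGrundy G (Set.Icc 1 N) Finset.univ = Fintype.card V) ∧
    (2 ≤ Fintype.card V → Fintype.card V ≤ N →
      2 ≤ csgGrundy G (Set.Icc 1 N) Finset.univ) ∧
    (Fintype.card V = N + 1 → csgGrundy G (Set.Icc 1 N) Finset.univ = 0) ∧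
    (Fintype.card V = N + 2 → csgGrundy G (Set.Icc 1 N) Finset.univ = 1) := by
  have hcoe : (Finset.univ : Finset V).card = Fintype.card V := Finset.card_univ
  have h1mem : (1 : ℕ) ∈ Set.Icc 1 N := Set.mem_Icc.mpr ⟨le_refl 1, hN⟩
  have hconn : 1 ≤ Fintype.card V → ConnOn G (↑(Finset.univ : Finset V) : Set V) := by
    intro h
    haveI : Nonempty V := Fintype.card_pos_iff.mp h
    have hc : G.Connected := ⟨hG⟩
    rw [ConnOn, Finset.coe_univ]
    exact (G.induceUnivIso.connected_iff).mpr hc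
  refine ⟨?_, ?_, ?_, ?_⟩
  · intro h1
    rcases Nat.le_one_iff_eq_zero_or_eq_one.mp h1 with h0 | h0
    · have he : (Finset.univ : Finset V) = ∅ := Finset.card_eq_zero.mp (by rw [hcoe, h0])
      rw [he, grundy_empty, h0]
    · obtain ⟨v, hv⟩ := Finset.card_eq_one.mp
        (show (Finset.univ : Finset V).card = 1 by rw [hcoe, h0])
      rw [hv, grundy_singleton G h1mem, h0]
  · intro h2 hle
    exact (csg_main hN G (Fintype.card V) Finset.univ (le_of_eq hcoe)
      (hconn (by omega))).1 (by omega) (by omega)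
  · intro h
    exact (csg_main hN G (Fintype.card V) Finset.univ (le_of_eq hcoe)
      (hconn (by omega))).2.1 (by omega)
  · intro h
    exact (csg_main hN G (Fintype.card V) Finset.univ (le_of_eq hcoe)
      (hconn (by omega))).2.2 (by omega)
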